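/- Let W be a finite Coxeter group, L ⊆ K ⊆ S, and x ∈ Y_K ∩ X_L^♯. Then the element w_L · w_{L ∪ (S \ K)} is a prefix of x, i.e. ℓ((w_L w_{L∪(S\K)})⁻¹ x) = ℓ(x) − ℓ(w_L w_{L∪(S\K)}). -/

import Mathlib

/-- The left descent set of `w`. -/
def CoxD {B W : Type*} [Group W] {M : CoxeterMatrix B} (cs : CoxeterSystem M W)
    (w : W) : Set B :=
  {s | cs.length (cs.simple s * w) < cs.length w}

/-- The set `X_L = {x : ℓ(sx) > ℓ(x) for all s ∈ L}`. -/
def CoxX {B W : Type*} [Group W] {M : CoxeterMatrix B} (cs : CoxeterSystem M W)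
    (L : Set B) : Set W :=
  {x | ∀ s ∈ L, cs.length (cs.simple s * x) > cs.length x}

/-- `X_L^♯ = {x ∈ X_L : x⁻¹ L x ⊆ S}`. -/
def CoxXsharp {B W : Type*} [Group W] {M : CoxeterMatrix B} (cs : CoxeterSystem M W)
    (L : Set B) : Set W :=
  {x | x ∈ CoxX cs L ∧ ∀ s ∈ L, ∃ t, x⁻¹ * cs.simple s * x = cs.simple t}

/-- The standard parabolic subgroup `W_J`. -/
def CoxParabolic {B W : Type*} [Group W] {M : CoxeterMatrix B} (cs : CoxeterSystem M W)
    (J : Set B) : Subgroup W :=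
  Subgroup.closure (cs.simple '' J)


open scoped Classical
set_option linter.unusedSectionVars false

namespace StmtAux

variable {B W : Type*} [Group W] {M : CoxeterMatrix B} (cs : CoxeterSystem M W)

local prefix:100 "s" => cs.simple
local prefix:100 "π" => cs.wordProd
local prefix:100 "ℓ" => cs.length

/-- counting an element in a list, mod 2 -/
noncomputable def zcount (t : W) (l : List W) : ZMod 2 :=
  (l.map fun r => if r = t then (1 : ZMod 2) else 0).sum

@[simp] lemma zcount_nil (t : W) : zcount t ([] : List W) = 0 := rfl

lemma zcount_cons (t a : W) (l : List W) :
    zcount t (a :: l) = (if a = t then 1 else 0) + zcount t l := by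
  simp [zcount]

lemma mem_of_zcount_eq_one {t : W} {l : List W} (h : zcount t l = 1) : t ∈ l := by
  by_contra hmem
  have : zcount t l = 0 := by
    apply List.sum_eq_zero
    intro x hx
    obtain ⟨r, hr, rfl⟩ := List.mem_map.mp hx
    rw [if_neg]
    rintro rfl
    exact hmem hr
  rw [this] at h
  exact zero_ne_one h

lemma zmod2_cases : ∀ x : ZMod 2, x = 0 ∨ x = 1 := by decide

/-- The basic involution used to build the reflection cocycle. -/
noncomputable def sigmaFun (i : B) : W × ZMod 2 → W × ZMod 2 :=
  fun p => (s i * p.1 * s i, p.2 + if p.1 = s i then 1 else 0)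

lemma sigmaFun_involutive (i : B) : Function.Involutive (sigmaFun cs i) := by
  intro p
  unfold sigmaFun
  have h1 : s i * (s i * p.1 * s i) * s i = p.1 := by
    rw [← mul_assoc, ← mul_assoc, cs.simple_mul_simple_self, one_mul,
      mul_assoc, cs.simple_mul_simple_self, mul_one]
  have h2 : (s i * p.1 * s i = s i) ↔ (p.1 = s i) := by
    constructor
    · intro h
      have := congrArg (fun w => s i * w * s i) h
      simpa [h1, ← mul_assoc, cs.simple_mul_simple_self] using this
    · rintro h
      rw [h, cs.simple_mul_simple_self, one_mul]
  ext
  · exact h1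
  · simp only
    rw [if_congr h2 rfl rfl, add_assoc]
    rcases ite_eq_or_eq (p.1 = s i) (1 : ZMod 2) 0 with h | h <;>
      rw [h] <;> simp [CharTwo.add_self_eq_zero]

/-- The basic permutation. -/
noncomputable def sigma (i : B) : Equiv.Perm (W × ZMod 2) :=
  (sigmaFun_involutive cs i).toPerm

lemma sigma_apply (i : B) (p : W × ZMod 2) :
    sigma cs i p = (s i * p.1 * s i, p.2 + if p.1 = s i then 1 else 0) := rfl


set_option maxHeartbeats 800000

lemma conj_eq_iff {A A' t v : W} : A * t * A' = v ↔ t = A⁻¹ * v * A'⁻¹ := by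
  constructor
  · intro h
    rw [← h]
    group
  · intro h
    rw [h]
    group

lemma semiconj_pow (i j : B) (m : ℕ) :
    s j * (s i * s j) ^ m = (s j * s i) ^ m * s j := by
  have h : SemiconjBy (s j) (s i * s j) (s j * s i) := by
    unfold SemiconjBy
    rw [← mul_assoc]
  exact (h.pow_right m).eq

lemma pow_inv_simple (i j : B) (m : ℕ) :
    ((s i * s j) ^ m)⁻¹ = (s j * s i) ^ m := by
  rw [← inv_pow, mul_inv_rev, cs.inv_simple, cs.inv_simple]

lemma simple_conj_eq_iff (j : B) (Q v : W) :
    s j * Q * s j = v ↔ Q = s j * v * s j := by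
  constructor
  · intro h
    rw [← h]
    simp only [← mul_assoc]
    rw [cs.simple_mul_simple_self, one_mul, cs.simple_mul_simple_cancel_right]
  · intro h
    rw [h]
    simp only [← mul_assoc]
    rw [cs.simple_mul_simple_self, one_mul, cs.simple_mul_simple_cancel_right]

lemma sigma_pow_apply (i j : B) (m : ℕ) (p : W × ZMod 2) :
    ((sigma cs i * sigma cs j) ^ m) p =
      ((s i * s j) ^ m * p.1 * (s j * s i) ^ m,
        p.2 + ∑ n ∈ Finset.range (2 * m),
          if p.1 = (s j * s i) ^ n * s j then 1 else 0) := by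
  induction m with
  | zero => simp
  | succ m ih =>
    rw [pow_succ', Equiv.Perm.mul_apply, ih, Equiv.Perm.mul_apply, sigma_apply, sigma_apply]
    set A := (s i * s j) ^ m with hA
    set A' := (s j * s i) ^ m with hA'
    have hAinv : A⁻¹ = A' := by rw [hA, hA']; exact pow_inv_simple cs i j m
    have hA'inv : A'⁻¹ = A := by rw [hA, hA']; exact pow_inv_simple cs j i m
    have h1 : s j * A = (s j * s i) ^ m * s j := by rw [hA]; exact semiconj_pow cs i j m
    have target1 : A' * s j * A = (s j * s i) ^ (2 * m) * s j := by
      calc A' * s j * A = A' * (s j * A) := by rw [mul_assoc]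
        _ = A' * ((s j * s i) ^ m * s j) := by rw [h1]
        _ = (s j * s i) ^ (2 * m) * s j := by
            rw [hA', two_mul, pow_add, mul_assoc]
    have target2 : A' * (s j * s i * s j) * A = (s j * s i) ^ (2 * m + 1) * s j := by
      calc A' * (s j * s i * s j) * A = (A' * (s j * s i)) * (s j * A) := by
            simp only [mul_assoc]
        _ = (s j * s i) ^ (m + 1) * ((s j * s i) ^ m * s j) := by
            rw [hA', ← pow_succ, h1]
        _ = (s j * s i) ^ (2 * m + 1) * s j := by
            rw [← mul_assoc, ← pow_add]
            congr 2
            omega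
    have key1 : (A * p.1 * A' = s j) ↔ (p.1 = (s j * s i) ^ (2 * m) * s j) := by
      rw [conj_eq_iff, hAinv, hA'inv, target1]
    have key2 : (s j * (A * p.1 * A') * s j = s i) ↔
        (p.1 = (s j * s i) ^ (2 * m + 1) * s j) := by
      rw [simple_conj_eq_iff, conj_eq_iff, hAinv, hA'inv, target2]
    have hsum : (2 * (m + 1)) = (2 * m) + 1 + 1 := by omega
    ext
    · show s i * (s j * (A * p.1 * A') * s j) * s i =
        (s i * s j) ^ (m + 1) * p.1 * (s j * s i) ^ (m + 1)
      rw [pow_succ', pow_succ, ← hA, ← hA']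
      simp only [mul_assoc]
    · show p.2 + (∑ n ∈ Finset.range (2 * m), if p.1 = (s j * s i) ^ n * s j then 1 else 0)
          + (if A * p.1 * A' = s j then 1 else 0)
          + (if s j * (A * p.1 * A') * s j = s i then 1 else 0) =
        p.2 + ∑ n ∈ Finset.range (2 * (m + 1)), if p.1 = (s j * s i) ^ n * s j then 1 else 0
      rw [hsum, Finset.sum_range_succ, Finset.sum_range_succ,
        if_congr key1 rfl rfl, if_congr key2 rfl rfl]
      simp only [add_assoc]

lemma sigma_liftable : M.IsLiftable (sigma cs) := by
  intro i j
  apply Equiv.ext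
  intro p
  have hp := sigma_pow_apply cs i j (M i j) p
  rw [cs.simple_mul_simple_pow, cs.simple_mul_simple_pow' i j] at hp
  have hperiod : ∀ n : ℕ, (s j * s i) ^ (M i j + n) = (s j * s i) ^ n := by
    intro n
    rw [pow_add, cs.simple_mul_simple_pow' i j, one_mul]
  have hz : ∑ n ∈ Finset.range (2 * M i j),
      (if p.1 = (s j * s i) ^ n * s j then (1 : ZMod 2) else 0) = 0 := by
    rw [two_mul, Finset.sum_range_add]
    have he : ∀ n, (if p.1 = (s j * s i) ^ (M i j + n) * s j then (1 : ZMod 2) else 0) =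
        (if p.1 = (s j * s i) ^ n * s j then (1 : ZMod 2) else 0) := by
      intro n
      rw [hperiod]
    simp only [he]
    exact CharTwo.add_self_eq_zero _
  rw [hz] at hp
  rw [hp]
  simp


/-- The permutation representation on `W × ZMod 2`. -/
noncomputable def phi : W →* Equiv.Perm (W × ZMod 2) :=
  cs.lift ⟨sigma cs, sigma_liftable cs⟩

lemma phi_simple (i : B) : phi cs (s i) = sigma cs i :=
  cs.lift_apply_simple (sigma_liftable cs) i

lemma phi_wordProd (ω : List B) (t : W) (ε : ZMod 2) :
    phi cs (π ω) (t, ε) = (π ω * t * (π ω)⁻¹, ε + zcount t (cs.rightInvSeq ω)) := by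
  induction ω generalizing ε with
  | nil => simp
  | cons i ω ih =>
    rw [cs.wordProd_cons, map_mul, Equiv.Perm.mul_apply, ih, phi_simple, sigma_apply]
    simp only [CoxeterSystem.rightInvSeq, zcount_cons]
    have hiff : (π ω * t * (π ω)⁻¹ = s i) ↔ ((π ω)⁻¹ * s i * π ω = t) := by
      rw [conj_eq_iff, inv_inv, eq_comm]
    ext
    · show s i * (π ω * t * (π ω)⁻¹) * s i = s i * π ω * t * (s i * π ω)⁻¹
      rw [mul_inv_rev, cs.inv_simple]
      simp only [mul_assoc]
    · show ε + zcount t (cs.rightInvSeq ω) + (if π ω * t * (π ω)⁻¹ = s i then 1 else 0) =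
        ε + ((if (π ω)⁻¹ * s i * π ω = t then 1 else 0) + zcount t (cs.rightInvSeq ω))
      rw [if_congr hiff rfl rfl]
      ring

/-- The reflection cocycle with values in `ZMod 2`. -/
noncomputable def NN (w t : W) : ZMod 2 := (phi cs w (t, 0)).2

lemma NN_wordProd (ω : List B) (t : W) :
    NN cs (π ω) t = zcount t (cs.rightInvSeq ω) := by
  unfold NN
  rw [phi_wordProd]
  simp

lemma phi_apply (w t : W) (ε : ZMod 2) :
    phi cs w (t, ε) = (w * t * w⁻¹, ε + NN cs w t) := by
  obtain ⟨ω, -, rfl⟩ := cs.exists_reduced_word' w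
  rw [phi_wordProd, NN_wordProd]

lemma NN_mul (u v t : W) :
    NN cs (u * v) t = NN cs v t + NN cs u (v * t * v⁻¹) := by
  unfold NN
  rw [map_mul, Equiv.Perm.mul_apply, phi_apply cs v t 0, phi_apply]
  simp only [zero_add]
  rfl

lemma NN_one (t : W) : NN cs 1 t = 0 := by
  unfold NN
  simp

lemma NN_simple_self (i : B) : NN cs (s i) (s i) = 1 := by
  have h : s i = π [i] := by simp [CoxeterSystem.wordProd_cons]
  rw [h, NN_wordProd]
  rw [CoxeterSystem.rightInvSeq_singleton]
  rw [← h]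
  simp [zcount_cons]

lemma NN_refl_self {t : W} (ht : cs.IsReflection t) : NN cs t t = 1 := by
  obtain ⟨a, i, rfl⟩ := ht
  have h1 := NN_mul cs a (s i * a⁻¹) (a * s i * a⁻¹)
  rw [← mul_assoc] at h1
  have e1 : (s i * a⁻¹) * (a * s i * a⁻¹) * (s i * a⁻¹)⁻¹ = s i := by
    simp only [mul_inv_rev, inv_inv, cs.inv_simple, mul_assoc, inv_mul_cancel_left,
      cs.simple_mul_simple_cancel_left]
  rw [e1] at h1
  have h2 := NN_mul cs (s i) a⁻¹ (a * s i * a⁻¹)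
  have e3 : a⁻¹ * (a * s i * a⁻¹) * a⁻¹⁻¹ = s i := by group
  rw [e3] at h2
  have h4 := NN_mul cs a a⁻¹ (a * s i * a⁻¹)
  rw [mul_inv_cancel, NN_one, e3] at h4
  rw [h1, h2, NN_simple_self]
  linear_combination h4.symm

lemma rdescent_of_NN_eq_one {w t : W} (ht : cs.IsReflection t) (h : NN cs w t = 1) :
    ℓ (w * t) < ℓ w := by
  obtain ⟨ω, hred, rfl⟩ := cs.exists_reduced_word' w
  rw [NN_wordProd] at h
  have hmem : t ∈ cs.rightInvSeq ω := mem_of_zcount_eq_one h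
  exact (cs.isRightInversion_of_mem_rightInvSeq hred hmem).2

lemma rdescent_iff_NN {w t : W} (ht : cs.IsReflection t) :
    ℓ (w * t) < ℓ w ↔ NN cs w t = 1 := by
  constructor
  · intro h
    rcases zmod2_cases (NN cs w t) with h0 | h1
    · exfalso
      have e : t * t * t⁻¹ = t := by rw [ht.mul_self, one_mul, ht.inv]
      have h2 : NN cs (w * t) t = 1 := by
        rw [NN_mul, e, h0, NN_refl_self cs ht, add_zero]
      have := rdescent_of_NN_eq_one cs ht h2
      rw [mul_assoc, ht.mul_self, mul_one] at this
      omega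
    · exact h1
  · exact rdescent_of_NN_eq_one cs ht


lemma ldescent_iff_NN {w t : W} (ht : cs.IsReflection t) :
    ℓ (t * w) < ℓ w ↔ NN cs w⁻¹ t = 1 := by
  have h1 : ℓ (t * w) = ℓ (w⁻¹ * t) := by
    rw [← cs.length_inv (w⁻¹ * t), mul_inv_rev, inv_inv, ht.inv]
  have h2 : ℓ w = ℓ w⁻¹ := (cs.length_inv w).symm
  rw [h1, h2]
  exact rdescent_iff_NN cs ht

/-- Right strong exchange, erase form. -/
lemma right_exchange_erase {t : W} (ht : cs.IsReflection t) (ω : List B)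
    (hlt : ℓ (π ω * t) < ℓ (π ω)) :
    ∃ j < ω.length, π ω * t = π (ω.eraseIdx j) := by
  have h1 : NN cs (π ω) t = 1 := (rdescent_iff_NN cs ht).mp hlt
  rw [NN_wordProd] at h1
  have hmem : t ∈ cs.rightInvSeq ω := mem_of_zcount_eq_one h1
  obtain ⟨j, hj, hget⟩ := List.getElem_of_mem hmem
  rw [CoxeterSystem.length_rightInvSeq] at hj
  refine ⟨j, hj, ?_⟩
  have := cs.wordProd_mul_getD_rightInvSeq ω j
  rw [List.getD_eq_getElem _ _ (by rwa [CoxeterSystem.length_rightInvSeq]), hget] at this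
  exact this

/-- Membership in a standard parabolic subgroup via words. -/
lemma mem_parabolic_iff_word (J : Set B) (u : W) :
    u ∈ CoxParabolic cs J ↔ ∃ ω : List B, (∀ i ∈ ω, i ∈ J) ∧ u = π ω := by
  constructor
  · intro hu
    induction hu using Subgroup.closure_induction with
    | mem g hg =>
      obtain ⟨i, hi, rfl⟩ := hg
      exact ⟨[i], by simpa using hi, by simp [CoxeterSystem.wordProd_cons]⟩
    | one => exact ⟨[], by simp, by simp⟩
    | mul g g' _ _ ihg ihg' =>
      obtain ⟨ω, hω, rfl⟩ := ihg
      obtain ⟨ω', hω', rfl⟩ := ihg'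
      exact ⟨ω ++ ω', by
        intro i hi
        rcases List.mem_append.mp hi with h | h
        exacts [hω i h, hω' i h], by rw [cs.wordProd_append]⟩
    | inv g _ ihg =>
      obtain ⟨ω, hω, rfl⟩ := ihg
      exact ⟨ω.reverse, by
        intro i hi
        exact hω i (List.mem_reverse.mp hi), by rw [cs.wordProd_reverse]⟩
  · rintro ⟨ω, hω, rfl⟩
    induction ω with
    | nil => simp [CoxeterSystem.wordProd_nil]
    | cons i ω ih =>
      rw [cs.wordProd_cons]
      apply Subgroup.mul_mem
      · exact Subgroup.subset_closure ⟨i, hω i List.mem_cons_self, rfl⟩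
      · exact ih fun j hj => hω j (List.mem_cons_of_mem i hj)

lemma simple_mem_parabolic {J : Set B} {i : B} (hi : i ∈ J) :
    s i ∈ CoxParabolic cs J :=
  Subgroup.subset_closure ⟨i, hi, rfl⟩

/-- Any `J`-word can be replaced by a reduced `J`-word with the same product. -/
lemma word_to_reduced (J : Set B) : ∀ n (ω : List B), ω.length = n → (∀ i ∈ ω, i ∈ J) →
    ∃ ω₂ : List B, (∀ i ∈ ω₂, i ∈ J) ∧ cs.IsReduced ω₂ ∧ π ω = π ω₂ := by
  intro n
  induction n using Nat.strong_induction_on with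
  | _ n ih =>
  intro ω hlen hω
  by_cases hred : cs.IsReduced ω
  · exact ⟨ω, hω, hred, rfl⟩
  have hlen_pos : 0 < ω.length := by
    rcases Nat.eq_zero_or_pos ω.length with h0 | h0
    · exfalso
      apply hred
      rw [List.eq_nil_of_length_eq_zero h0]
      simp [CoxeterSystem.IsReduced]
    · exact h0
  have hex : ∃ k, ¬ cs.IsReduced (ω.take (k + 1)) := by
    refine ⟨ω.length - 1, ?_⟩
    rwa [show ω.length - 1 + 1 = ω.length by omega, List.take_length]
  classical
  set k := Nat.find hex with hkdef
  have hk : ¬ cs.IsReduced (ω.take (k + 1)) := Nat.find_spec hex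
  have hkle : k ≤ ω.length - 1 := Nat.find_min' hex (by
    rwa [show ω.length - 1 + 1 = ω.length by omega, List.take_length])
  have hk_lt : k < ω.length := by omega
  have htk_red : cs.IsReduced (ω.take k) := by
    rcases Nat.eq_zero_or_pos k with h0 | h0
    · rw [h0]
      simp [CoxeterSystem.IsReduced]
    · have := Nat.find_min hex (m := k - 1) (by omega)
      push_neg at this
      rwa [show k - 1 + 1 = k by omega] at this
  set i₀ := ω[k] with hi₀
  have htake1 : ω.take (k + 1) = ω.take k ++ [i₀] := by
    rw [List.take_succ, List.getElem?_eq_getElem hk_lt]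
    rfl
  have hwlen : ℓ (π (ω.take k)) = k := by
    have := htk_red
    unfold CoxeterSystem.IsReduced at this
    rw [this, List.length_take]
    omega
  have hconcat : π (ω.take (k + 1)) = π (ω.take k) * s i₀ := by
    rw [htake1, cs.wordProd_append]
    congr 1
    simp [CoxeterSystem.wordProd_cons]
  have hlt : ℓ (π (ω.take k) * s i₀) < ℓ (π (ω.take k)) := by
    rcases cs.length_mul_simple (π (ω.take k)) i₀ with h | h
    · exfalso
      apply hk
      unfold CoxeterSystem.IsReduced
      rw [hconcat, h, hwlen, List.length_take]
      omega
    · omega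
  obtain ⟨j, hj, hje⟩ := right_exchange_erase cs (cs.isReflection_simple i₀) (ω.take k) hlt
  rw [List.length_take, min_eq_left hk_lt.le] at hj
  set ω' := ((ω.take k).eraseIdx j) ++ ω.drop (k + 1) with hω'def
  have hprod : π ω' = π ω := by
    rw [hω'def, cs.wordProd_append, ← hje, ← hconcat,
      ← cs.wordProd_append, List.take_append_drop]
  have hsub : ∀ i ∈ ω', i ∈ J := by
    intro i hi
    rcases List.mem_append.mp hi with h | h
    · exact hω i (List.take_subset k ω (List.eraseIdx_subset h))
    · exact hω i (List.drop_subset (k + 1) ω h)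
  have hlen' : ω'.length < n := by
    rw [hω'def, List.length_append, List.length_drop]
    have h1 : ((ω.take k).eraseIdx j).length = k - 1 := by
      rw [List.length_eraseIdx, List.length_take, min_eq_left hk_lt.le, if_pos hj]
    omega
  obtain ⟨ω₂, h1, h2, h3⟩ := ih ω'.length hlen' ω' rfl hsub
  exact ⟨ω₂, h1, h2, by rw [← h3, hprod]⟩

/-- Every element of a standard parabolic subgroup has a reduced word in `J`. -/
lemma exists_reduced_word_parabolic (J : Set B) (u : W) (hu : u ∈ CoxParabolic cs J) :
    ∃ ω : List B, (∀ i ∈ ω, i ∈ J) ∧ cs.IsReduced ω ∧ u = π ω := by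
  obtain ⟨ω, hω, rfl⟩ := (mem_parabolic_iff_word cs J u).mp hu
  obtain ⟨ω₂, h1, h2, h3⟩ := word_to_reduced cs J ω.length ω rfl hω
  exact ⟨ω₂, h1, h2, h3⟩

/-- Peel a simple reflection from the left of a parabolic element. -/
lemma parabolic_peel {J : Set B} {u : W} (hu : u ∈ CoxParabolic cs J) (hne : u ≠ 1) :
    ∃ i ∈ J, ∃ u', u' ∈ CoxParabolic cs J ∧ u = s i * u' ∧ ℓ u = ℓ u' + 1 := by
  obtain ⟨ω, hω, hred, rfl⟩ := exists_reduced_word_parabolic cs J u hu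
  cases ω with
  | nil =>
    exfalso
    apply hne
    simp [CoxeterSystem.wordProd_nil]
  | cons i ω' =>
    refine ⟨i, hω i List.mem_cons_self, π ω', ?_, by rw [cs.wordProd_cons], ?_⟩
    · exact (mem_parabolic_iff_word cs J _).mpr
        ⟨ω', fun j hj => hω j (List.mem_cons_of_mem i hj), rfl⟩
    · have h1 : ℓ (π (i :: ω')) = ω'.length + 1 := by
        have := hred
        unfold CoxeterSystem.IsReduced at this
        rw [this]
        simp
      have h2 : ℓ (π ω') ≤ ω'.length := cs.length_wordProd_le ω'
      have h3 : ℓ (π (i :: ω')) ≤ 1 + ℓ (π ω') := by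
        rw [cs.wordProd_cons]
        have := cs.length_mul_le (s i) (π ω')
        rwa [cs.length_simple] at this
      omega


lemma parabolic_refl {J : Set B} {a : W} (ha : a ∈ CoxParabolic cs J) (i : B) (hi : i ∈ J) :
    a⁻¹ * s i * a ∈ CoxParabolic cs J :=
  Subgroup.mul_mem _ (Subgroup.mul_mem _ (Subgroup.inv_mem _ ha)
    (simple_mem_parabolic cs hi)) ha

/-- Key lemma: if every element of `J` is a left descent of `g`, then every element `u` of
`W_J` satisfies `ℓ(u) + ℓ(u⁻¹ g) = ℓ(g)`. -/
lemma prefix_of_descents (J : Set B) (g : W) (hg : ∀ i ∈ J, ℓ (s i * g) < ℓ g) :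
    ∀ u ∈ CoxParabolic cs J, ℓ u + ℓ (u⁻¹ * g) = ℓ g := by
  suffices h : ∀ n, ∀ u ∈ CoxParabolic cs J, ℓ u = n → ℓ u + ℓ (u⁻¹ * g) = ℓ g by
    intro u hu
    exact h (ℓ u) u hu rfl
  intro n
  induction n using Nat.strong_induction_on with
  | _ n ih =>
  intro u hu hlen
  by_cases hone : u = 1
  · subst hone
    simp
  obtain ⟨i, hi, u', hu', hpeel, hlu⟩ := parabolic_peel cs hu hone
  have ihu' : ℓ u' + ℓ (u'⁻¹ * g) = ℓ g := ih (ℓ u') (by omega) u' hu' rfl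
  -- t = u'⁻¹ s i u' is a reflection
  have htrefl : cs.IsReflection (u'⁻¹ * s i * u') := by
    refine ⟨u'⁻¹, i, ?_⟩
    rw [inv_inv]
  -- N(u', t) = 0 since ℓ(u' * t) = ℓ(s i * u') = ℓ u > ℓ u'
  have hN1 : NN cs u' (u'⁻¹ * s i * u') = 0 := by
    rcases zmod2_cases (NN cs u' (u'⁻¹ * s i * u')) with h0 | h1
    · exact h0
    exfalso
    have := rdescent_of_NN_eq_one cs htrefl h1
    rw [show u' * (u'⁻¹ * s i * u') = s i * u' by group, ← hpeel] at this
    omega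
  -- N(g⁻¹, s i) = 1 since i is a left descent of g
  have hN2 : NN cs g⁻¹ (s i) = 1 := by
    exact (ldescent_iff_NN cs (cs.isReflection_simple i)).mp (hg i hi)
  -- cocycle: N(g⁻¹ u', t) = N(u', t) + N(g⁻¹, u' t u'⁻¹) = 0 + N(g⁻¹, s i) = 1
  have hN3 : NN cs (g⁻¹ * u') (u'⁻¹ * s i * u') = 1 := by
    rw [NN_mul, hN1, zero_add,
      show u' * (u'⁻¹ * s i * u') * u'⁻¹ = s i by group]
    exact hN2
  have hlt : ℓ (g⁻¹ * u' * (u'⁻¹ * s i * u')) < ℓ (g⁻¹ * u') :=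
    rdescent_of_NN_eq_one cs htrefl hN3
  rw [show g⁻¹ * u' * (u'⁻¹ * s i * u') = g⁻¹ * (s i * u') by group, ← hpeel] at hlt
  have e1 : ℓ (g⁻¹ * u) = ℓ (u⁻¹ * g) := by
    rw [← cs.length_inv (g⁻¹ * u), mul_inv_rev, inv_inv]
  have e2 : ℓ (g⁻¹ * u') = ℓ (u'⁻¹ * g) := by
    rw [← cs.length_inv (g⁻¹ * u'), mul_inv_rev, inv_inv]
  have htri : ℓ g ≤ ℓ u + ℓ (u⁻¹ * g) := by
    have := cs.length_mul_le u (u⁻¹ * g)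
    rwa [show u * (u⁻¹ * g) = g by group] at this
  omega

/-- Existence of a minimal-length element in a left coset `W_J y`. -/
lemma exists_min_coset (J : Set B) (y : W) :
    ∃ z u₀, u₀ ∈ CoxParabolic cs J ∧ z = u₀ * y ∧
      ∀ u ∈ CoxParabolic cs J, ℓ z ≤ ℓ (u * y) := by
  classical
  have hex : ∃ n : ℕ, ∃ u ∈ CoxParabolic cs J, ℓ (u * y) = n :=
    ⟨ℓ (1 * y), 1, Subgroup.one_mem _, rfl⟩
  obtain ⟨u₀, hu₀, hlen⟩ := Nat.find_spec hex
  refine ⟨u₀ * y, u₀, hu₀, rfl, ?_⟩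
  intro u hu
  rw [hlen]
  exact Nat.find_min' hex ⟨u, hu, rfl⟩

/-- If `z` has minimal length in its coset `W_J z`, lengths add. -/
lemma lengths_add_of_min (J : Set B) (z : W)
    (hz : ∀ u ∈ CoxParabolic cs J, ℓ z ≤ ℓ (u * z)) :
    ∀ v ∈ CoxParabolic cs J, ℓ (v * z) = ℓ v + ℓ z := by
  suffices h : ∀ n, ∀ v ∈ CoxParabolic cs J, ℓ v = n → ℓ (v * z) = ℓ v + ℓ z by
    intro v hv
    exact h (ℓ v) v hv rfl
  intro n
  induction n using Nat.strong_induction_on with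
  | _ n ih =>
  intro v hv hlen
  by_cases hone : v = 1
  · subst hone
    simp
  obtain ⟨i, hi, v', hv', hpeel, hlv⟩ := parabolic_peel cs hv hone
  have ihv' : ℓ (v' * z) = ℓ v' + ℓ z := ih (ℓ v') (by omega) v' hv' rfl
  have hcases : ℓ (s i * (v' * z)) = ℓ (v' * z) + 1 ∨ ℓ (s i * (v' * z)) + 1 = ℓ (v' * z) :=
    cs.length_simple_mul (v' * z) i
  rcases hcases with h | h
  · rw [hpeel] at hlv ⊢
    rw [mul_assoc, h, ihv']
    omega
  · exfalso
    -- i is a left descent of v' z; derive a shorter element of the coset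
    have htrefl : cs.IsReflection (v'⁻¹ * s i * v') := ⟨v'⁻¹, i, by rw [inv_inv]⟩
    have hdesc : ℓ (s i * (v' * z)) < ℓ (v' * z) := by omega
    have hN := (ldescent_iff_NN cs (cs.isReflection_simple i)).mp hdesc
    rw [show (v' * z)⁻¹ = z⁻¹ * v'⁻¹ by rw [mul_inv_rev], NN_mul] at hN
    have hN1 : NN cs v'⁻¹ (s i) = 0 := by
      rcases zmod2_cases (NN cs v'⁻¹ (s i)) with h0 | h1
      · exact h0
      exfalso
      have := rdescent_of_NN_eq_one cs (cs.isReflection_simple i) h1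
      rw [← cs.length_inv (v'⁻¹ * s i), mul_inv_rev, inv_inv, cs.inv_simple, ← hpeel] at this
      rw [cs.length_inv] at this
      omega
    rw [hN1, zero_add] at hN
    have hN2 : NN cs z⁻¹ (v'⁻¹ * s i * v'⁻¹⁻¹) = 1 := hN
    rw [inv_inv] at hN2
    have hlt := rdescent_of_NN_eq_one cs htrefl hN2
    have e : ℓ (z⁻¹ * (v'⁻¹ * s i * v')) = ℓ ((v'⁻¹ * s i * v') * z) := by
      rw [← cs.length_inv (z⁻¹ * (v'⁻¹ * s i * v'))]
      congr 1
      have : (v'⁻¹ * s i * v')⁻¹ = v'⁻¹ * s i * v' := htrefl.inv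
      rw [mul_inv_rev, this, inv_inv]
    rw [e, cs.length_inv] at hlt
    have hmem : v'⁻¹ * s i * v' ∈ CoxParabolic cs J :=
      parabolic_refl cs hv' i hi
    exact absurd hlt (not_lt.mpr (hz _ hmem))


/-- If `z` has no left descents in `J`, then lengths add: `ℓ(v z) = ℓ(v) + ℓ(z)`. -/
lemma lengths_add_of_no_descent (J : Set B) (z : W)
    (hz : ∀ i ∈ J, ℓ z < ℓ (s i * z)) :
    ∀ v ∈ CoxParabolic cs J, ℓ (v * z) = ℓ v + ℓ z := by
  obtain ⟨z₀, u₀, hu₀, hz₀, hmin⟩ := exists_min_coset cs J z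
  have hmin' : ∀ u ∈ CoxParabolic cs J, ℓ z₀ ≤ ℓ (u * z₀) := by
    intro u hu
    have := hmin (u * u₀) (Subgroup.mul_mem _ hu hu₀)
    rwa [mul_assoc, ← hz₀] at this
  have hadd := lengths_add_of_min cs J z₀ hmin'
  have hzdec : z = u₀⁻¹ * z₀ := by rw [hz₀, ← mul_assoc, inv_mul_cancel, one_mul]
  -- u₀⁻¹ must be trivial
  have hu₀inv : u₀⁻¹ ∈ CoxParabolic cs J := Subgroup.inv_mem _ hu₀
  by_cases hone : u₀⁻¹ = 1
  · have hzz : z = z₀ := by rw [hzdec, hone, one_mul]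
    intro v hv
    rw [hzz]
    exact hadd v hv
  · exfalso
    obtain ⟨i, hi, w', hw', hpeel, hlw⟩ := parabolic_peel cs hu₀inv hone
    have h1 : s i * z = w' * z₀ := by
      rw [hzdec, hpeel, ← mul_assoc, ← mul_assoc, cs.simple_mul_simple_self, one_mul]
    have h2 : ℓ (s i * z) = ℓ w' + ℓ z₀ := by rw [h1]; exact hadd w' hw'
    have h3 : ℓ z = ℓ u₀⁻¹ + ℓ z₀ := by
      rw [hzdec]
      exact hadd u₀⁻¹ hu₀inv
    have := hz i hi
    omega

/-- Conjugation by an element that maps simples (within a word) to simples. -/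
lemma conj_wordProd (g : W) (f : B → B) (P : Set B)
    (hf : ∀ i ∈ P, g⁻¹ * s i * g = s (f i)) (ω : List B) (hω : ∀ i ∈ ω, i ∈ P) :
    g⁻¹ * π ω * g = π (ω.map f) := by
  induction ω with
  | nil => simp [CoxeterSystem.wordProd_nil]
  | cons i ω ih =>
    rw [cs.wordProd_cons, List.map_cons, cs.wordProd_cons,
      ← ih fun j hj => hω j (List.mem_cons_of_mem i hj),
      ← hf i (hω i List.mem_cons_self)]
    group

/-- Every element of `J` is both a left and a right descent of a maximal-length element
of `W_J`. -/
lemma longest_descents {J : Set B} {w₀ : W} (hmem : w₀ ∈ CoxParabolic cs J)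
    (hmax : ∀ u ∈ CoxParabolic cs J, ℓ u ≤ ℓ w₀) {i : B} (hi : i ∈ J) :
    ℓ (s i * w₀) < ℓ w₀ ∧ ℓ (w₀ * s i) < ℓ w₀ := by
  constructor
  · have h1 : s i * w₀ ∈ CoxParabolic cs J :=
      Subgroup.mul_mem _ (simple_mem_parabolic cs hi) hmem
    have h2 := hmax _ h1
    have h3 := cs.length_simple_mul w₀ i
    omega
  · have h1 : w₀ * s i ∈ CoxParabolic cs J :=
      Subgroup.mul_mem _ hmem (simple_mem_parabolic cs hi)
    have h2 := hmax _ h1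
    have h3 := cs.length_mul_simple w₀ i
    omega

end StmtAux

open StmtAux in
theorem stmt10 {B W : Type*} [Fintype B] [Group W] [Fintype W]
    {M : CoxeterMatrix B} (cs : CoxeterSystem M W) (L K : Set B) (hLK : L ⊆ K)
    (wL wLK : W)
    (hwL : wL ∈ CoxParabolic cs L ∧
      ∀ u ∈ CoxParabolic cs L, cs.length u ≤ cs.length wL)
    (hwLK : wLK ∈ CoxParabolic cs (L ∪ Kᶜ) ∧
      ∀ u ∈ CoxParabolic cs (L ∪ Kᶜ), cs.length u ≤ cs.length wLK)
    (x : W) (hx : CoxD cs x = Kᶜ) (hx' : x ∈ CoxXsharp cs L) :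
    cs.length (wL * wLK) + cs.length ((wL * wLK)⁻¹ * x) = cs.length x := by
  classical
  obtain ⟨hwLmem, hwLmax⟩ := hwL
  obtain ⟨hwLKmem, hwLKmax⟩ := hwLK
  obtain ⟨hxX, hxconj⟩ := hx'
  have hxX' : ∀ i ∈ L, cs.length x < cs.length (cs.simple i * x) := hxX
  -- the conjugation maps
  let τ : B → B := fun i =>
    if h : ∃ t, x⁻¹ * cs.simple i * x = cs.simple t then h.choose else i
  have hτ : ∀ i ∈ L, x⁻¹ * cs.simple i * x = cs.simple (τ i) := by
    intro i hi
    have h : ∃ t, x⁻¹ * cs.simple i * x = cs.simple t := hxconj i hi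
    simp only [τ, dif_pos h]
    exact h.choose_spec
  set L' : Set B := {t | ∃ i ∈ L, τ i = t} with hL'def
  let υ : B → B := fun t =>
    if h : ∃ i, x * cs.simple t * x⁻¹ = cs.simple i then h.choose else t
  have hυ : ∀ t ∈ L', x * cs.simple t * x⁻¹ = cs.simple (υ t) := by
    intro t ht
    obtain ⟨i, hi, rfl⟩ := ht
    have h : ∃ i', x * cs.simple (τ i) * x⁻¹ = cs.simple i' := by
      refine ⟨i, ?_⟩
      rw [← hτ i hi]
      group
    simp only [υ, dif_pos h]
    exact h.choose_spec
  -- part 1 : c = x⁻¹ wL⁻¹ x has length ℓ(wL) and lies in W_{L'}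
  have hwLinvmem : wL⁻¹ ∈ CoxParabolic cs L := Subgroup.inv_mem _ hwLmem
  obtain ⟨ω₁, hω₁L, hω₁red, hω₁⟩ := exists_reduced_word_parabolic cs L wL⁻¹ hwLinvmem
  have hω₁len : ω₁.length = cs.length wL := by
    have := hω₁red
    unfold CoxeterSystem.IsReduced at this
    rw [← this, ← hω₁, cs.length_inv]
  set c : W := x⁻¹ * wL⁻¹ * x with hcdef
  have hc_word : c = cs.wordProd (ω₁.map τ) := by
    rw [hcdef, hω₁]
    exact conj_wordProd cs x τ L hτ ω₁ hω₁L
  have hc_mem : c ∈ CoxParabolic cs L' := by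
    rw [mem_parabolic_iff_word]
    refine ⟨ω₁.map τ, ?_, hc_word⟩
    intro t ht
    obtain ⟨i, hi, rfl⟩ := List.mem_map.mp ht
    exact ⟨i, hω₁L i hi, rfl⟩
  have hc_le : cs.length c ≤ cs.length wL := by
    rw [hc_word]
    have := cs.length_wordProd_le (ω₁.map τ)
    rwa [List.length_map, hω₁len] at this
  obtain ⟨ω₂, hω₂L', hω₂red, hω₂⟩ := exists_reduced_word_parabolic cs L' c hc_mem
  have hω₂len : ω₂.length = cs.length c := by
    have := hω₂red
    unfold CoxeterSystem.IsReduced at this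
    rw [← this, ← hω₂]
  have hc_ge : cs.length wL ≤ cs.length c := by
    have hconj2 : (x⁻¹)⁻¹ * cs.wordProd ω₂ * x⁻¹ = cs.wordProd (ω₂.map υ) := by
      apply conj_wordProd cs x⁻¹ υ L' _ ω₂ hω₂L'
      intro t ht
      rw [inv_inv]
      exact hυ t ht
    have hback : wL⁻¹ = cs.wordProd (ω₂.map υ) := by
      rw [← hconj2, ← hω₂, inv_inv, hcdef]
      group
    have h1 : cs.length wL⁻¹ ≤ (ω₂.map υ).length := by
      rw [hback]
      exact cs.length_wordProd_le _
    rwa [cs.length_inv, List.length_map, hω₂len] at h1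
  have hc_len : cs.length c = cs.length wL := le_antisymm hc_le hc_ge
  -- part 2 : x⁻¹ has no left descents in L'
  have hx_inv_desc : ∀ t ∈ L', cs.length x⁻¹ < cs.length (cs.simple t * x⁻¹) := by
    intro t ht
    obtain ⟨i, hi, rfl⟩ := ht
    have h1 : cs.simple (τ i) * x⁻¹ = (x * cs.simple (τ i))⁻¹ := by
      rw [mul_inv_rev, cs.inv_simple]
    have h2 : x * cs.simple (τ i) = cs.simple i * x := by
      rw [← hτ i hi]
      group
    rw [h1, cs.length_inv, h2, cs.length_inv]
    exact hxX' i hi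
  -- part 3 : ℓ(wL⁻¹ x) = ℓ wL + ℓ x
  have hxc : wL⁻¹ * x = x * c := by
    rw [hcdef]
    group
  have hy_add : cs.length (wL⁻¹ * x) = cs.length wL + cs.length x := by
    have h1 : cs.length (c⁻¹ * x⁻¹) = cs.length c⁻¹ + cs.length x⁻¹ :=
      lengths_add_of_no_descent cs L' x⁻¹ hx_inv_desc c⁻¹ (Subgroup.inv_mem _ hc_mem)
    have h2 : (x * c)⁻¹ = c⁻¹ * x⁻¹ := by rw [mul_inv_rev]
    rw [hxc, ← cs.length_inv, h2, h1, cs.length_inv, cs.length_inv, hc_len]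
  -- part 4 : every element of J = L ∪ Kᶜ is a left descent of wL⁻¹ x
  have hKdesc : ∀ i ∈ Kᶜ, cs.length (cs.simple i * x) < cs.length x := by
    intro i hi
    have : i ∈ CoxD cs x := by rw [hx]; exact hi
    exact this
  have hJdesc : ∀ i ∈ L ∪ Kᶜ,
      cs.length (cs.simple i * (wL⁻¹ * x)) < cs.length (wL⁻¹ * x) := by
    intro i hi
    rcases hi with hi | hi
    · -- i ∈ L
      set d : W := cs.simple i * wL⁻¹ with hddef
      have hd_mem : d ∈ CoxParabolic cs L :=
        Subgroup.mul_mem _ (simple_mem_parabolic cs hi) hwLinvmem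
      have hd_len : cs.length d < cs.length wL := by
        have h1 : cs.length d = cs.length (wL * cs.simple i) := by
          rw [hddef, ← cs.length_inv, mul_inv_rev, inv_inv, cs.inv_simple]
        rw [h1]
        exact (longest_descents cs hwLmem hwLmax hi).2
      obtain ⟨ω₃, hω₃L, hω₃red, hω₃⟩ := exists_reduced_word_parabolic cs L d hd_mem
      have hω₃len : ω₃.length = cs.length d := by
        have := hω₃red
        unfold CoxeterSystem.IsReduced at this
        rw [← this, ← hω₃]
      have hconj3 : x⁻¹ * d * x = cs.wordProd (ω₃.map τ) := by
        rw [hω₃]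
        exact conj_wordProd cs x τ L hτ ω₃ hω₃L
      have hdx : d * x = x * cs.wordProd (ω₃.map τ) := by
        rw [← hconj3]
        group
      have h2 : cs.simple i * (wL⁻¹ * x) = d * x := by
        rw [hddef, mul_assoc]
      rw [h2, hdx, hy_add]
      calc cs.length (x * cs.wordProd (ω₃.map τ))
          ≤ cs.length x + cs.length (cs.wordProd (ω₃.map τ)) := cs.length_mul_le _ _
        _ ≤ cs.length x + cs.length d := by
            have := cs.length_wordProd_le (ω₃.map τ)
            rw [List.length_map, hω₃len] at this
            omega
        _ < cs.length wL + cs.length x := by omega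
    · -- i ∈ Kᶜ
      have h1 : cs.simple i * (wL⁻¹ * x) = (cs.simple i * x) * c := by
        rw [hxc]
        group
      rw [h1, hy_add]
      calc cs.length (cs.simple i * x * c)
          ≤ cs.length (cs.simple i * x) + cs.length c := cs.length_mul_le _ _
        _ < cs.length x + cs.length wL := by
            have := hKdesc i hi
            omega
        _ = cs.length wL + cs.length x := by omega
  -- part 5 : apply the prefix lemma twice
  have main1 := prefix_of_descents cs (L ∪ Kᶜ) (wL⁻¹ * x) hJdesc wLK hwLKmem
  have hJwLK : ∀ i ∈ L ∪ Kᶜ, cs.length (cs.simple i * wLK) < cs.length wLK := by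
    intro i hi
    exact (longest_descents cs hwLKmem hwLKmax hi).1
  have hWLsub : CoxParabolic cs L ≤ CoxParabolic cs (L ∪ Kᶜ) :=
    Subgroup.closure_mono (Set.image_mono Set.subset_union_left)
  have main2 := prefix_of_descents cs (L ∪ Kᶜ) wLK hJwLK wL⁻¹ (hWLsub hwLinvmem)
  rw [inv_inv, cs.length_inv] at main2
  have hsplit : (wL * wLK)⁻¹ * x = wLK⁻¹ * (wL⁻¹ * x) := by
    rw [mul_inv_rev, mul_assoc]
  rw [hsplit]
  omega
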